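/- Let K = ℂ, s ≠ 0 with q = s^2, x0 ≠ 0, and define the operator T0 on functions f of the nonzero variable x (with x ≠ s and q/x ≠ s as needed) by (T0 f)(x) = i·(x/(s - x))·( -((s + x·x0^2)/(x·x0))·f(q/x) + (x0 + 1/x0)·f(x) ). Then T0 satisfies the Iwahori–Hecke quadratic relation: for every function f and every admissible x, ((T0 + i x0)(T0 + i x0^{-1}) f)(x) = 0. -/

import Mathlib

set_option maxHeartbeats 1600000


/-- Iwahori–Hecke operator `T0` of the genus-two DAHA representation, with `q = s^2` -/
noncomputable def T0op (s x0 : ℂ) (f : ℂ → ℂ) (x : ℂ) : ℂ :=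
  Complex.I * (x / (s - x)) * (-((s + x * x0 ^ 2) / (x * x0)) * f (s ^ 2 / x)
    + (x0 + 1 / x0) * f x)

theorem stmt_14 (s q x0 : ℂ) (hs : s ≠ 0) (hsq : s ^ 2 = q) (hx0 : x0 ≠ 0)
    (f : ℂ → ℂ) (x : ℂ) (hx : x ≠ 0) (h1 : x ≠ s) :
    T0op s x0 (fun y => T0op s x0 f y + Complex.I * x0⁻¹ * f y) x
      + Complex.I * x0 * (T0op s x0 f x + Complex.I * x0⁻¹ * f x) = 0 := by
  have hsx : s - x ≠ 0 := sub_ne_zero.mpr (Ne.symm h1)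
  have hxs : x - s ≠ 0 := sub_ne_zero.mpr h1
  have hq : s ^ 2 / x ≠ 0 := div_ne_zero (pow_ne_zero 2 hs) hx
  have hinv : s ^ 2 / (s ^ 2 / x) = x := by field_simp
  have h2 : s - s ^ 2 / x = s * (x - s) / x := by field_simp
  have c1 : (s ^ 2 / x) / (s * (x - s) / x) = s / (x - s) := by
    rw [div_eq_div_iff (div_ne_zero (mul_ne_zero hs hxs) hx) hxs]
    field_simp
  have c2 : (s + (s ^ 2 / x) * x0 ^ 2) / ((s ^ 2 / x) * x0) = (x + s * x0 ^ 2) / (s * x0) := by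
    rw [div_eq_div_iff (mul_ne_zero hq hx0) (mul_ne_zero hs hx0)]
    field_simp
  simp only [T0op, hinv, h2, c1, c2]
  set a := f x with ha
  set b := f (s ^ 2 / x) with hb
  have hI : Complex.I * Complex.I = -1 := Complex.I_mul_I
  field_simp
  have d1 : x * x0 * ((x - s) * (s * x0 * x0) * x0) ≠ 0 :=
    mul_ne_zero (mul_ne_zero hx hx0)
      (mul_ne_zero (mul_ne_zero hxs (mul_ne_zero (mul_ne_zero hs hx0) hx0)) hx0)
  have d2 : x0 * ((s - x) * (x * x0 * x0) * x0) ≠ 0 :=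
    mul_ne_zero hx0
      (mul_ne_zero (mul_ne_zero hsx (mul_ne_zero (mul_ne_zero hx hx0) hx0)) hx0)
  have d3 : (s - x) * (x * x0 * x0) * x0 ≠ 0 :=
    mul_ne_zero (mul_ne_zero hsx (mul_ne_zero (mul_ne_zero hx hx0) hx0)) hx0
  rw [Complex.I_sq]
  ring
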